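/- Let f(x₁,…,x_{n+1}) be a polynomial multilinear in x₁,…,x_{n+1} and alternating in x₁,…,x_n. Define f̃(x₁,…,x_{n+1}) = Σ_{k=1}^{n+1} (−1)^{k−1} f(x₁,…,x_{k−1},x_{k+1},…,x_{n+1},x_k). Then f̃ is alternating in all n+1 variables x₁,…,x_{n+1}. -/

import Mathlib

open Finset

/-- The polynomial `f̃(x₁,…,x_{n+1}) = Σ_{k=1}^{n+1} (−1)^{k−1}
f(x₁,…,x_{k−1},x_{k+1},…,x_{n+1},x_k)` associated to a multilinear `f`, modeled as a
multilinear map: the `k`-th summand feeds the arguments with `x_k` removed (in order),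
followed by `x_k` in the last slot. -/
noncomputable def fTilde {C : Type*} [CommRing C] {A : Type*} [Ring A] [Algebra C A]
    {n : ℕ} (f : MultilinearMap C (fun _ : Fin (n + 1) => A) A) (v : Fin (n + 1) → A) : A :=
  ∑ k : Fin (n + 1), (-1 : ℤ) ^ (k : ℕ) •
    f (fun t => if h : (t : ℕ) < n then v (k.succAbove ⟨t, h⟩) else v k)

section Helpers

theorem swap_succAbove (n : ℕ) (i : Fin n) (p : Fin n) :
    Equiv.swap i.castSucc i.succ (i.castSucc.succAbove p) = i.succ.succAbove p := by
  rcases lt_trichotomy p i with h | h | h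
  · have hv : (p : ℕ) < (i : ℕ) := h
    have h1 : p.castSucc < i.castSucc := by
      simp only [Fin.lt_def, Fin.coe_castSucc]; omega
    have h2 : p.castSucc < i.succ := by
      simp only [Fin.lt_def, Fin.coe_castSucc, Fin.val_succ]; omega
    rw [Fin.succAbove_of_castSucc_lt _ _ h1, Fin.succAbove_of_castSucc_lt _ _ h2,
      Equiv.swap_apply_of_ne_of_ne (ne_of_lt h1) (ne_of_lt h2)]
  · subst h
    rw [Fin.succAbove_of_le_castSucc _ _ le_rfl, Equiv.swap_apply_right,
      Fin.succAbove_of_castSucc_lt _ _ (Fin.castSucc_lt_succ (i := p))]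
  · have hv : (i : ℕ) < (p : ℕ) := h
    have h1 : i.castSucc ≤ p.castSucc := by
      simp only [Fin.le_def, Fin.coe_castSucc]; omega
    have h2 : i.succ ≤ p.castSucc := by
      simp only [Fin.le_def, Fin.coe_castSucc, Fin.val_succ]; omega
    rw [Fin.succAbove_of_le_castSucc _ _ h1, Fin.succAbove_of_le_castSucc _ _ h2,
      Equiv.swap_apply_of_ne_of_ne]
    · intro hc
      have := congrArg Fin.val hc
      simp only [Fin.val_succ, Fin.coe_castSucc] at this; omega
    · intro hc
      have := congrArg Fin.val hc
      simp only [Fin.val_succ] at this; omega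

variable {A : Type*} {n : ℕ}

/-- The argument vector of the `k`-th summand of `fTilde`. -/
def Bfun (k : Fin (n + 1)) (v : Fin (n + 1) → A) : Fin (n + 1) → A :=
  Fin.snoc (v ∘ k.succAbove) (v k)

theorem Bfun_swap_self (v : Fin (n + 1) → A) (i : Fin n) :
    Bfun i.castSucc (v ∘ Equiv.swap i.castSucc i.succ) = Bfun i.succ v := by
  have h1 : (v ∘ Equiv.swap i.castSucc i.succ) ∘ i.castSucc.succAbove
      = v ∘ i.succ.succAbove := by
    funext p; exact congrArg v (swap_succAbove n i p)
  have h2 : (v ∘ Equiv.swap i.castSucc i.succ) i.castSucc = v i.succ :=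
    congrArg v (Equiv.swap_apply_left _ _)
  rw [Bfun, Bfun, h1, h2]

theorem Bfun_swap_self' (v : Fin (n + 1) → A) (i : Fin n) :
    Bfun i.succ (v ∘ Equiv.swap i.castSucc i.succ) = Bfun i.castSucc v := by
  have h1 : (v ∘ Equiv.swap i.castSucc i.succ) ∘ i.succ.succAbove
      = v ∘ i.castSucc.succAbove := by
    funext p
    refine congrArg v ?_
    have := congrArg (Equiv.swap i.castSucc i.succ) (swap_succAbove n i p)
    rw [Equiv.swap_apply_self] at this; exact this.symm
  have h2 : (v ∘ Equiv.swap i.castSucc i.succ) i.succ = v i.castSucc :=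
    congrArg v (Equiv.swap_apply_right _ _)
  rw [Bfun, Bfun, h1, h2]

theorem Bfun_swap_ne (v : Fin (n + 1) → A) (i j k : Fin (n + 1)) (hij : i ≠ j)
    (hki : k ≠ i) (hkj : k ≠ j) :
    ∃ p q : Fin n, p ≠ q ∧
      Bfun k (v ∘ Equiv.swap i j) = (Bfun k v) ∘ Equiv.swap p.castSucc q.castSucc := by
  obtain ⟨p, hp⟩ := Fin.exists_succAbove_eq hki.symm
  obtain ⟨q, hq⟩ := Fin.exists_succAbove_eq hkj.symm
  have hpq : p ≠ q := by
    intro h; exact hij (hp ▸ hq ▸ h ▸ rfl)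
  refine ⟨p, q, hpq, ?_⟩
  funext t
  induction t using Fin.lastCases with
  | last =>
    have h1 : Equiv.swap p.castSucc q.castSucc (Fin.last n) = Fin.last n :=
      Equiv.swap_apply_of_ne_of_ne (Fin.castSucc_lt_last p).ne' (Fin.castSucc_lt_last q).ne'
    simp only [Function.comp_apply, h1, Bfun, Fin.snoc_last, Equiv.swap_apply_of_ne_of_ne hki hkj]
  | cast t₀ =>
    have h1 : Equiv.swap p.castSucc q.castSucc t₀.castSucc
        = (Equiv.swap p q t₀).castSucc :=
      (Fin.castSucc_injective n).swap_apply p q t₀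
    simp only [Function.comp_apply, h1, Bfun, Fin.snoc_castSucc]
    refine congrArg v ?_
    rcases eq_or_ne t₀ p with rfl | htp
    · rw [Equiv.swap_apply_left, hp, hq, Equiv.swap_apply_left]
    rcases eq_or_ne t₀ q with rfl | htq
    · rw [Equiv.swap_apply_right, hp, hq, Equiv.swap_apply_right]
    · rw [Equiv.swap_apply_of_ne_of_ne htp htq,
        Equiv.swap_apply_of_ne_of_ne (fun h => htp (Fin.succAbove_right_injective (h.trans hp.symm)))
          (fun h => htq (Fin.succAbove_right_injective (h.trans hq.symm)))]

end Helpers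

section Main

variable {C : Type*} [CommRing C] {A : Type*} [Ring A] [Algebra C A] {n : ℕ}
variable (f : MultilinearMap C (fun _ : Fin (n + 1) => A) A)

theorem fTilde_eq (v : Fin (n + 1) → A) :
    fTilde f v = ∑ k : Fin (n + 1), (-1 : ℤ) ^ (k : ℕ) • f (Bfun k v) := by
  unfold fTilde
  refine Finset.sum_congr rfl fun k _ => ?_
  have harg : (fun t : Fin (n + 1) => if h : (t : ℕ) < n then v (k.succAbove ⟨t, h⟩) else v k) = Bfun k v := by
    funext t
    by_cases h : (t : ℕ) < n
    · rw [dif_pos h]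
      have ht : t = Fin.castSucc ⟨t, h⟩ := by ext; rfl
      conv_rhs => rw [ht]
      rw [Bfun, Fin.snoc_castSucc]
      rfl
    · rw [dif_neg h]
      have ht : t = Fin.last n := by ext; simp; omega
      rw [ht, Bfun, Fin.snoc_last]
  rw [harg]

variable (halt : ∀ (v : Fin (n + 1) → A) (i j : Fin (n + 1)), i ≠ j →
      (i : ℕ) < n → (j : ℕ) < n → f (v ∘ Equiv.swap i j) + f v = 0)

include halt

theorem cancel_ne (v : Fin (n + 1) → A) (i j k : Fin (n + 1)) (hij : i ≠ j)
    (hki : k ≠ i) (hkj : k ≠ j) :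
    f (Bfun k (v ∘ Equiv.swap i j)) + f (Bfun k v) = 0 := by
  obtain ⟨p, q, hpq, hB⟩ := Bfun_swap_ne v i j k hij hki hkj
  rw [hB]
  exact halt (Bfun k v) p.castSucc q.castSucc
    (fun h => hpq (Fin.castSucc_injective n h)) p.isLt q.isLt

theorem fTilde_adj (v : Fin (n + 1) → A) (i : Fin n) :
    fTilde f (v ∘ Equiv.swap i.castSucc i.succ) = -fTilde f v := by
  have hne : i.castSucc ≠ i.succ := (Fin.castSucc_lt_succ (i := i)).ne
  rw [fTilde_eq, fTilde_eq]
  have key : ∀ k : Fin (n + 1),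
      (-1 : ℤ) ^ (k : ℕ) • f (Bfun k (v ∘ Equiv.swap i.castSucc i.succ))
      = -((-1 : ℤ) ^ ((Equiv.swap i.castSucc i.succ k : Fin (n + 1)) : ℕ) •
          f (Bfun (Equiv.swap i.castSucc i.succ k) v)) := by
    intro k
    rcases eq_or_ne k i.castSucc with rfl | hk1
    · rw [Equiv.swap_apply_left, Bfun_swap_self]
      simp only [Fin.coe_castSucc, Fin.val_succ, pow_succ, mul_neg_one, neg_smul, neg_neg]
    rcases eq_or_ne k i.succ with rfl | hk2
    · rw [Equiv.swap_apply_right, Bfun_swap_self']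
      simp only [Fin.coe_castSucc, Fin.val_succ, pow_succ, mul_neg_one, neg_smul, neg_neg]
    · rw [Equiv.swap_apply_of_ne_of_ne hk1 hk2]
      have := cancel_ne f halt v i.castSucc i.succ k hne hk1 hk2
      rw [eq_neg_of_add_eq_zero_left this, smul_neg]
  calc ∑ k : Fin (n + 1), (-1 : ℤ) ^ (k : ℕ) • f (Bfun k (v ∘ Equiv.swap i.castSucc i.succ))
      = ∑ k : Fin (n + 1), -((-1 : ℤ) ^ ((Equiv.swap i.castSucc i.succ k : Fin (n + 1)) : ℕ) •
          f (Bfun (Equiv.swap i.castSucc i.succ k) v)) := Finset.sum_congr rfl fun k _ => key k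
    _ = -∑ k : Fin (n + 1), (-1 : ℤ) ^ ((Equiv.swap i.castSucc i.succ k : Fin (n + 1)) : ℕ) •
          f (Bfun (Equiv.swap i.castSucc i.succ k) v) := by rw [Finset.sum_neg_distrib]
    _ = -∑ k : Fin (n + 1), (-1 : ℤ) ^ (k : ℕ) • f (Bfun k v) := by
          rw [Equiv.sum_comp (Equiv.swap i.castSucc i.succ)
            (fun k => (-1 : ℤ) ^ (k : ℕ) • f (Bfun k v))]

theorem fTilde_perm (σ : Equiv.Perm (Fin (n + 1))) (v : Fin (n + 1) → A) :
    fTilde f (v ∘ σ) = (Equiv.Perm.sign σ : ℤ) • fTilde f v := by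
  have hσ : σ ∈ (⊤ : Submonoid (Equiv.Perm (Fin (n + 1)))) := trivial
  rw [← Equiv.Perm.mclosure_swap_castSucc_succ n] at hσ
  induction hσ using Submonoid.closure_induction generalizing v with
  | mem τ hτ =>
    obtain ⟨i, rfl⟩ := hτ
    rw [fTilde_adj f halt v i, Equiv.Perm.sign_swap (Fin.castSucc_lt_succ (i := i)).ne]
    simp
  | one =>
    simp only [map_one, Equiv.Perm.coe_one, Function.comp_id, Units.val_one, one_smul]
  | mul σ₁ σ₂ h₁ h₂ ih₁ ih₂ =>
    have : v ∘ ⇑(σ₁ * σ₂) = (v ∘ σ₁) ∘ σ₂ := rfl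
    rw [this, ih₂ (v ∘ σ₁), ih₁ v, map_mul, smul_smul, Units.val_mul, mul_comm]

end Main

/-- Let `f(x₁,…,x_{n+1})` be multilinear in `x₁,…,x_{n+1}` and alternating in `x₁,…,x_n`.
Then `f̃(x₁,…,x_{n+1}) = Σ_{k=1}^{n+1} (−1)^{k−1} f(x₁,…,x_{k−1},x_{k+1},…,x_{n+1},x_k)`
is alternating in all `n+1` variables `x₁,…,x_{n+1}`. -/
theorem stmt_13 (C : Type*) [CommRing C] (A : Type*) [Ring A] [Algebra C A] (n : ℕ)
    (f : MultilinearMap C (fun _ : Fin (n + 1) => A) A)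
    (halt : ∀ (v : Fin (n + 1) → A) (i j : Fin (n + 1)), i ≠ j →
      (i : ℕ) < n → (j : ℕ) < n → f (v ∘ Equiv.swap i j) + f v = 0) :
    ∀ (v : Fin (n + 1) → A) (i j : Fin (n + 1)), i ≠ j →
      fTilde f (v ∘ Equiv.swap i j) + fTilde f v = 0 := by
  intro v i j hij
  have h := fTilde_perm f halt (Equiv.swap i j) v
  rw [Equiv.Perm.sign_swap hij] at h
  simp only [Units.val_neg, Units.val_one, neg_smul, one_smul] at h
  rw [h, neg_add_cancel]
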